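/- Every facet-defining graph G (i.e., STAB(G) has a full-support facet) with at least 2 vertices has no clique cutset: there is no clique Q in G such that G − Q is disconnected. -/

import Mathlib

open Finset

variable {V : Type*}

def IsStableSet (G : SimpleGraph V) (S : Set V) : Prop :=
  S.Pairwise (fun a b => ¬ G.Adj a b)

def ClawFree (G : SimpleGraph V) : Prop :=
  ¬ ∃ x a b c : V, G.Adj x a ∧ G.Adj x b ∧ G.Adj x c ∧
    a ≠ b ∧ a ≠ c ∧ b ≠ c ∧ ¬ G.Adj a b ∧ ¬ G.Adj a c ∧ ¬ G.Adj b c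

noncomputable def stabilityNumber (G : SimpleGraph V) [Fintype V] : ℕ :=
  sSup {n | ∃ S : Finset V, IsStableSet G ↑S ∧ S.card = n}

def STAB (G : SimpleGraph V) [Fintype V] [DecidableEq V] : Set (V → ℝ) :=
  convexHull ℝ {x | ∃ S : Finset V, IsStableSet G ↑S ∧ x = fun i => if i ∈ S then (1:ℝ) else 0}

def ESTAB (G : SimpleGraph V) : Set (V → ℝ) :=
  {x | (∀ i, 0 ≤ x i ∧ x i ≤ 1) ∧ ∀ i j, G.Adj i j → x i + x j ≤ 1}

def coneSet (K : Set (V → ℝ)) : Set (ℝ × (V → ℝ)) :=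
  {p | ∃ (t : ℝ) (y : V → ℝ), 0 ≤ t ∧ y ∈ K ∧ p = (t, t • y)}

def Mplus (K : Set (V → ℝ)) [Fintype V] [DecidableEq V] :
    Set (Matrix (Option V) (Option V) ℝ) :=
  {Y | Y.PosSemidef ∧ (∀ i, Y i none = Y i i) ∧
    (∀ i : V, (Y none (some i), fun j => Y (some j) (some i)) ∈ coneSet K) ∧
    (∀ i : V, (Y none none - Y none (some i),
        fun j => Y (some j) none - Y (some j) (some i)) ∈ coneSet K)}

def LSplus (K : Set (V → ℝ)) [Fintype V] [DecidableEq V] : Set (V → ℝ) :=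
  {x | ∃ Y ∈ Mplus K, Y none none = 1 ∧ ∀ i, Y (some i) none = x i}

def cycleG (n : ℕ) : SimpleGraph (ZMod n) :=
  SimpleGraph.fromRel (fun a b => b = a + 1)

/-- STAB(G) has a full-support facet: a valid inequality with all coefficients nonzero
whose equality set contains |V| affinely independent points of STAB(G). -/
def HasFullSupportFacet {V : Type*} [Fintype V] [DecidableEq V] (G : SimpleGraph V) : Prop :=
  ∃ (a : V → ℝ) (b : ℝ), (∀ i, a i ≠ 0) ∧
    (∀ x ∈ STAB G, ∑ i, a i * x i ≤ b) ∧
    ∃ f : Fin (Fintype.card V) → (V → ℝ), AffineIndependent ℝ f ∧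
      ∀ m, f m ∈ STAB G ∧ ∑ i, a i * f m i = b

section ChvatalAux

open scoped Classical

variable {V : Type*} [Fintype V] [DecidableEq V]

/-- characteristic vector of a finset -/
noncomputable def chiF (S : Finset V) : V → ℝ := fun i => if i ∈ S then (1:ℝ) else 0

lemma chiF_mem_STAB (G : SimpleGraph V) (S : Finset V) (hS : IsStableSet G ↑S) :
    chiF S ∈ STAB G :=
  subset_convexHull ℝ _ ⟨S, hS, rfl⟩

lemma sum_mul_chiF (a : V → ℝ) (S : Finset V) : ∑ i, a i * chiF S i = ∑ i ∈ S, a i := by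
  have h : ∀ i, a i * chiF S i = if i ∈ S then a i else 0 := by
    intro i; simp [chiF, mul_ite]
  rw [Finset.sum_congr rfl (fun i _ => h i), Finset.sum_ite_mem, Finset.univ_inter]

/-- the linear functional `x ↦ ∑ i, a i * x i` -/
noncomputable def sumLin (a : V → ℝ) : (V → ℝ) →ₗ[ℝ] ℝ where
  toFun x := ∑ i, a i * x i
  map_add' x y := by simp [mul_add, Finset.sum_add_distrib]
  map_smul' c x := by
    simp only [Pi.smul_apply, smul_eq_mul, RingHom.id_apply]
    rw [Finset.mul_sum]
    exact Finset.sum_congr rfl fun i _ => by ring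

lemma sumLin_chiF (a : V → ℝ) (S : Finset V) : sumLin a (chiF S) = ∑ i ∈ S, a i :=
  sum_mul_chiF a S

/-- The exchange argument: if `S` and `T` are stable sets with the same trace on `Q`,
`S` is tight, then the `A`-part of `T` weighs at most the `A`-part of `S`. -/
lemma exchange_le (G : SimpleGraph V) (a : V → ℝ) (b : ℝ)
    (hvalid : ∀ x ∈ STAB G, ∑ i, a i * x i ≤ b)
    (Q A B : Set V)
    (hcov : ∀ v : V, v ∉ A → v ∉ Q → v ∈ B)
    (hAB : ∀ u ∈ A, ∀ v ∈ B, ¬ G.Adj u v)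
    (S T : Finset V) (hS : IsStableSet G ↑S) (hT : IsStableSet G ↑T)
    (hSb : ∑ i ∈ S, a i = b)
    (htr : S.filter (· ∈ Q) = T.filter (· ∈ Q)) :
    ∑ i ∈ T.filter (· ∈ A), a i ≤ ∑ i ∈ S.filter (· ∈ A), a i := by
  set U : Finset V := T.filter (· ∈ A) ∪ S.filter (· ∉ A) with hU
  have hdisj : Disjoint (T.filter (· ∈ A)) (S.filter (· ∉ A)) := by
    rw [Finset.disjoint_left]
    intro i hi hi'
    exact (Finset.mem_filter.1 hi').2 (Finset.mem_filter.1 hi).2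
  have mixed : ∀ u v : V, u ∈ T.filter (· ∈ A) → v ∈ S.filter (· ∉ A) →
      u ≠ v → ¬ G.Adj u v := by
    intro u v hu hv hne hadj
    obtain ⟨huT, huA⟩ := Finset.mem_filter.1 hu
    obtain ⟨hvS, hvA⟩ := Finset.mem_filter.1 hv
    by_cases hvQ : v ∈ Q
    · have hvT : v ∈ T := by
        have : v ∈ S.filter (· ∈ Q) := Finset.mem_filter.2 ⟨hvS, hvQ⟩
        rw [htr] at this
        exact (Finset.mem_filter.1 this).1
      exact hT (Finset.mem_coe.2 huT) (Finset.mem_coe.2 hvT) hne hadj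
    · exact hAB u huA v (hcov v hvA hvQ) hadj
  have hUstable : IsStableSet G ↑U := by
    intro u hu v hv hne hadj
    rw [Finset.mem_coe, hU, Finset.mem_union] at hu hv
    rcases hu with hu | hu <;> rcases hv with hv | hv
    · exact hT (Finset.mem_coe.2 (Finset.mem_filter.1 hu).1)
        (Finset.mem_coe.2 (Finset.mem_filter.1 hv).1) hne hadj
    · exact mixed u v hu hv hne hadj
    · exact mixed v u hv hu hne.symm hadj.symm
    · exact hS (Finset.mem_coe.2 (Finset.mem_filter.1 hu).1)
        (Finset.mem_coe.2 (Finset.mem_filter.1 hv).1) hne hadj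
  have hle := hvalid (chiF U) (chiF_mem_STAB G U hUstable)
  rw [sum_mul_chiF, hU, Finset.sum_union hdisj] at hle
  have hsplit := Finset.sum_filter_add_sum_filter_not S (· ∈ A) a
  rw [hSb] at hsplit
  linarith

lemma trace_constant (G : SimpleGraph V) (a : V → ℝ) (b : ℝ)
    (hvalid : ∀ x ∈ STAB G, ∑ i, a i * x i ≤ b)
    (Q A B : Set V)
    (hcov : ∀ v : V, v ∉ A → v ∉ Q → v ∈ B)
    (hAB : ∀ u ∈ A, ∀ v ∈ B, ¬ G.Adj u v)
    (S T : Finset V) (hS : IsStableSet G ↑S) (hT : IsStableSet G ↑T)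
    (hSb : ∑ i ∈ S, a i = b) (hTb : ∑ i ∈ T, a i = b)
    (htr : S.filter (· ∈ Q) = T.filter (· ∈ Q)) :
    ∑ i ∈ S.filter (· ∈ A), a i = ∑ i ∈ T.filter (· ∈ A), a i :=
  le_antisymm
    (exchange_le G a b hvalid Q A B hcov hAB T S hT hS hTb htr.symm)
    (exchange_le G a b hvalid Q A B hcov hAB S T hS hT hSb htr)

end ChvatalAux

/-- a facet-defining graph (STAB(G) has a full-support facet) with at least
two vertices has no clique cutset. -/
theorem stmt16 {V : Type*} [Fintype V] [DecidableEq V] (G : SimpleGraph V)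
    (hV : 2 ≤ Fintype.card V) (hf : HasFullSupportFacet G) :
    ¬ ∃ Q : Set V, G.IsClique Q ∧
      ∃ x y : ↥(Qᶜ), ¬ (G.induce (Qᶜ)).Reachable x y := by
  classical
  rintro ⟨Q, hQ, x, y, hxy⟩
  obtain ⟨a, b, ha0, hvalid, f, hf_ind, hf_mem⟩ := hf
  -- the two sides of the separation
  set A : Set V := {v | ∃ h : v ∈ Qᶜ, (G.induce (Qᶜ)).Reachable x ⟨v, h⟩} with hA
  set B : Set V := Qᶜ \ A with hB
  have hxA : (x : V) ∈ A := ⟨x.2, SimpleGraph.Reachable.refl x⟩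
  have hyB : (y : V) ∈ B := by
    refine ⟨y.2, fun hy => hxy ?_⟩
    obtain ⟨h, hr⟩ := hy
    exact hr
  have hcov : ∀ v : V, v ∉ A → v ∉ Q → v ∈ B := fun v hvA hvQ => ⟨hvQ, hvA⟩
  have hAB : ∀ u ∈ A, ∀ v ∈ B, ¬ G.Adj u v := by
    rintro u ⟨hu, hru⟩ v ⟨hv, hvA⟩ hadj
    refine hvA ⟨hv, hru.trans (SimpleGraph.Adj.reachable ?_)⟩
    exact hadj
  have hAQ : ∀ i, i ∈ A → i ∉ Q := by
    rintro i ⟨hi, _⟩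
    exact hi
  have hBQ : ∀ i, i ∈ B → i ∉ Q := fun i hi => hi.1
  have hxQ : (x : V) ∉ Q := hAQ _ hxA
  have hyA : (y : V) ∉ A := hyB.2
  clear_value A B
  -- tight stable sets
  set Ti : Finset V → Prop := fun S => IsStableSet G ↑S ∧ ∑ i ∈ S, a i = b with hTi
  set αv : Finset V → ℝ := fun S => ∑ i ∈ S.filter (· ∈ A), a i with hαv
  have hconst : ∀ S T : Finset V, Ti S → Ti T →
      S.filter (· ∈ Q) = T.filter (· ∈ Q) → αv S = αv T := by
    intro S T hS hT htr
    simpa only [hαv] using trace_constant G a b hvalid Q A B hcov hAB S T hS.1 hT.1 hS.2 hT.2 htr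
  -- the trace of a tight set on the clique Q is empty or a singleton
  have htrcard : ∀ S : Finset V, IsStableSet G ↑S →
      S.filter (· ∈ Q) = ∅ ∨ ∃ q ∈ Q, S.filter (· ∈ Q) = {q} := by
    intro S hS
    rcases Finset.eq_empty_or_nonempty (S.filter (· ∈ Q)) with h | ⟨q, hq⟩
    · exact Or.inl h
    · right
      have hq' := Finset.mem_filter.1 hq
      refine ⟨q, hq'.2, Finset.eq_singleton_iff_unique_mem.2 ⟨hq, ?_⟩⟩
      intro p hp
      have hp' := Finset.mem_filter.1 hp
      by_contra hpq
      exact hS (Finset.mem_coe.2 hp'.1) (Finset.mem_coe.2 hq'.1) hpq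
        (hQ hp'.2 hq'.2 hpq)
  -- correcting coefficients on Q
  set c : ℝ := if h : ∃ S, Ti S ∧ S.filter (· ∈ Q) = ∅ then αv h.choose else 0 with hc
  set γ : V → ℝ :=
    fun q => if h : ∃ S, Ti S ∧ S.filter (· ∈ Q) = {q} then c - αv h.choose else 0 with hγ
  set lcoef : V → ℝ := fun i => if i ∈ A then a i else if i ∈ Q then γ i else 0 with hlcoef
  -- every tight stable set satisfies the second linear equation
  have tight_ell : ∀ S : Finset V, Ti S → ∑ i ∈ S, lcoef i = c := by
    intro S hS
    have hsplit := Finset.sum_filter_add_sum_filter_not S (· ∈ A) lcoef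
    have h1 : ∑ i ∈ S.filter (· ∈ A), lcoef i = αv S := by
      refine Finset.sum_congr rfl fun i hi => ?_
      rw [hlcoef]
      exact if_pos (Finset.mem_filter.1 hi).2
    have h2 : ∑ i ∈ S.filter (· ∉ A), lcoef i = ∑ i ∈ S.filter (· ∈ Q), γ i := by
      have e1 : ∀ i ∈ S.filter (· ∉ A), lcoef i = if i ∈ Q then γ i else 0 := by
        intro i hi
        rw [hlcoef]
        exact if_neg (Finset.mem_filter.1 hi).2
      rw [Finset.sum_congr rfl e1, ← Finset.sum_filter, Finset.filter_filter]
      refine Finset.sum_congr (Finset.filter_congr ?_) fun _ _ => rfl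
      intro i _
      constructor
      · rintro ⟨_, h⟩; exact h
      · intro h; exact ⟨fun hiA => hAQ i hiA h, h⟩
    rcases htrcard S hS.1 with htr | ⟨q, hqQ, htr⟩
    · have hex : ∃ S', Ti S' ∧ S'.filter (· ∈ Q) = ∅ := ⟨S, hS, htr⟩
      have hcval : c = αv hex.choose := by rw [hc, dif_pos hex]
      have hSc : αv S = c := by
        rw [hcval]
        exact hconst S hex.choose hS hex.choose_spec.1
          (htr.trans hex.choose_spec.2.symm)
      rw [htr] at h2
      simp only [Finset.sum_empty] at h2
      linarith [hsplit, h1, h2, hSc]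
    · have hex : ∃ S', Ti S' ∧ S'.filter (· ∈ Q) = {q} := ⟨S, hS, htr⟩
      have hγval : γ q = c - αv hex.choose := by rw [hγ]; exact dif_pos hex
      have hSc : αv S = αv hex.choose :=
        hconst S hex.choose hS hex.choose_spec.1 (htr.trans hex.choose_spec.2.symm)
      rw [htr, Finset.sum_singleton, hγval] at h2
      linarith [hsplit, h1, h2, hSc]
  -- the points f m all satisfy the second linear equation
  have hm : ∀ m, sumLin lcoef (f m) = c := by
    intro m
    obtain ⟨hmem, heq⟩ := hf_mem m
    rw [STAB, _root_.convexHull_eq] at hmem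
    obtain ⟨ι, t, w, z, hw0, hw1, hz, hcm⟩ := hmem
    have hfm_eq : f m = ∑ i ∈ t, w i • z i := by
      rw [← hcm, Finset.centerMass, hw1, inv_one, one_smul]
    have hLsum : ∀ L : (V → ℝ) →ₗ[ℝ] ℝ, L (f m) = ∑ i ∈ t, w i * L (z i) := by
      intro L
      rw [hfm_eq, map_sum]
      exact Finset.sum_congr rfl fun i _ => by rw [map_smul, smul_eq_mul]
    have hLab : ∑ i ∈ t, w i * sumLin a (z i) = b := by
      rw [← hLsum]
      exact heq
    have hvb : ∀ i ∈ t, sumLin a (z i) ≤ b := by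
      intro i hi
      exact hvalid (z i) (subset_convexHull ℝ _ (hz i hi))
    have htight : ∀ i ∈ t, w i ≠ 0 → sumLin a (z i) = b := by
      intro i hi hwi
      by_contra hne
      have hlt : sumLin a (z i) < b := lt_of_le_of_ne (hvb i hi) hne
      have hstrict : ∑ j ∈ t, w j * sumLin a (z j) < ∑ j ∈ t, w j * b := by
        refine Finset.sum_lt_sum (fun j hj =>
          mul_le_mul_of_nonneg_left (hvb j hj) (hw0 j hj)) ⟨i, hi, ?_⟩
        exact mul_lt_mul_of_pos_left hlt (lt_of_le_of_ne (hw0 i hi) (Ne.symm hwi))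
      rw [← Finset.sum_mul, hw1, one_mul, hLab] at hstrict
      exact lt_irrefl b hstrict
    rw [hLsum]
    have hcongr : ∀ i ∈ t, w i * sumLin lcoef (z i) = w i * c := by
      intro i hi
      by_cases hwi : w i = 0
      · rw [hwi, zero_mul, zero_mul]
      · congr 1
        obtain ⟨S, hSstable, hzS⟩ := hz i hi
        have hzchi : z i = chiF S := hzS
        have hTiS : Ti S := by
          refine ⟨hSstable, ?_⟩
          rw [← sum_mul_chiF a S]
          have := htight i hi hwi
          rw [hzchi] at this
          exact this
        rw [hzchi, sumLin_chiF]
        exact tight_ell S hTiS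
    rw [Finset.sum_congr rfl hcongr, ← Finset.sum_mul, hw1, one_mul]
  -- the combined linear map
  set L : (V → ℝ) →ₗ[ℝ] ℝ × ℝ := (sumLin a).prod (sumLin lcoef) with hL
  have hLf : ∀ m, L (f m) = (b, c) := by
    intro m
    have h1 : sumLin a (f m) = b := (hf_mem m).2
    have h2 : sumLin lcoef (f m) = c := hm m
    rw [hL, LinearMap.prod_apply]
    simp only [Function.prod, h1, h2]
  have hspan : vectorSpan ℝ (Set.range f) ≤ LinearMap.ker L := by
    rw [vectorSpan_def, Submodule.span_le]
    rintro d ⟨u, hu, v, hv, rfl⟩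
    obtain ⟨m1, rfl⟩ := hu
    obtain ⟨m2, rfl⟩ := hv
    simp only [SetLike.mem_coe, LinearMap.mem_ker, vsub_eq_sub, map_sub, hLf, sub_self]
  -- L is surjective
  have hsurj : Function.Surjective L := by
    rintro ⟨p, q⟩
    refine ⟨((p - q) / a y) • chiF {(y : V)} + (q / a x) • chiF {(x : V)}, ?_⟩
    have e1 : sumLin a (chiF {(y : V)}) = a y := by
      rw [sumLin_chiF, Finset.sum_singleton]
    have e2 : sumLin a (chiF {(x : V)}) = a x := by
      rw [sumLin_chiF, Finset.sum_singleton]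
    have e3 : sumLin lcoef (chiF {(y : V)}) = 0 := by
      rw [sumLin_chiF, Finset.sum_singleton, hlcoef]
      simp only [if_neg hyA, if_neg (hBQ _ hyB)]
    have e4 : sumLin lcoef (chiF {(x : V)}) = a x := by
      rw [sumLin_chiF, Finset.sum_singleton, hlcoef]
      exact if_pos hxA
    rw [hL, LinearMap.prod_apply]
    simp only [Function.prod, map_add, map_smul, smul_eq_mul, e1, e2, e3, e4, mul_zero]
    rw [div_mul_cancel₀ _ (ha0 y), div_mul_cancel₀ _ (ha0 x)]
    rw [Prod.mk.injEq]
    constructor <;> ring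
  have hrange : LinearMap.range L = ⊤ := LinearMap.range_eq_top.2 hsurj
  have hrn := LinearMap.finrank_range_add_finrank_ker L
  rw [hrange, finrank_top] at hrn
  have hprod : Module.finrank ℝ (ℝ × ℝ) = 2 := by
    simp [Module.finrank_prod]
  have hpi : Module.finrank ℝ (V → ℝ) = Fintype.card V :=
    Module.finrank_fintype_fun_eq_card ℝ
  have hvs : Module.finrank ℝ (vectorSpan ℝ (Set.range f)) = Fintype.card V - 1 :=
    hf_ind.finrank_vectorSpan (by rw [Fintype.card_fin]; omega)
  have hle := Submodule.finrank_mono hspan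
  rw [hvs] at hle
  omega
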